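/- Let (U,𝒟⁺) be a dynamic covering information system of (U,𝒟), where 𝒟 = {𝒞₁,…,𝒞_m} is a family of coverings of U and 𝒟⁺ = {𝒞₁,…,𝒞_m,𝒞_{m+1}}. Write Π(𝒟) = (d_ij) and Π(𝒟⁺) = (e_ij), and let a^{m+1}_{ik} denote the entries of M_{𝒞_{m+1}}. Then for all i, j: if d_ij = 0 then e_ij = 0, and if d_ij = 1 then e_ij equals the ⊙-product of the i-th row of M_{𝒞_{m+1}} with the transpose of its j-th row, i.e., e_ij = 1 if a^{m+1}_{ik} ≤ a^{m+1}_{jk} for every k ≤ |𝒞_{m+1}| and e_ij = 0 otherwise. -/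

import Mathlib

/-- Boolean product of Boolean matrices: `(A • B) i j = ⋁ k, A i k ∧ B k j`. -/
def bDot {α β γ : Type*} [Fintype β] (A : α → β → Bool) (B : β → γ → Bool) :
    α → γ → Bool := fun i j => decide (∃ k, A i k = true ∧ B k j = true)

/-- The `⊙` product of Boolean matrices: `(A ⊙ B) i j = 1` iff `A i k ≤ B k j` for all `k`. -/
def oDot {α β γ : Type*} [Fintype β] (A : α → β → Bool) (B : β → γ → Bool) :
    α → γ → Bool := fun i j => decide (∀ k, A i k ≤ B k j)

/-- Matrix representation of a family of subsets of `Fin n` indexed by `ι`. -/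
def Mrep {n : ℕ} {ι : Type*} (C : ι → Finset (Fin n)) : Fin n → ι → Bool :=
  fun i j => decide (i ∈ C j)

/-- Type-1 characteristic matrix `Γ(𝒞) = M_𝒞 • M_𝒞ᵀ`. -/
def Gamma {n : ℕ} {ι : Type*} [Fintype ι] (C : ι → Finset (Fin n)) :
    Fin n → Fin n → Bool :=
  bDot (Mrep C) (fun k j => Mrep C j k)

/-- Type-2 characteristic matrix `Π(𝒞) = M_𝒞 ⊙ M_𝒞ᵀ`. -/
def Pi2 {n : ℕ} {ι : Type*} [Fintype ι] (C : ι → Finset (Fin n)) :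
    Fin n → Fin n → Bool :=
  oDot (Mrep C) (fun k j => Mrep C j k)

/-- An indexed family of subsets of `Fin n` is a covering: all blocks nonempty
and they cover the universe. -/
def IsCovering {n : ℕ} {ι : Type*} (C : ι → Finset (Fin n)) : Prop :=
  (∀ k, (C k).Nonempty) ∧ ∀ x : Fin n, ∃ k, x ∈ C k

/-- Theorem 3.14: with `Π(𝒟) = (d_ij)` and `Π(𝒟⁺) = (e_ij)`, if `d_ij = 0`
then `e_ij = 0`, and if `d_ij = 1` then `e_ij` is the `⊙`-product of the
`i`-th row of `M_{𝒞_{m+1}}` with the transpose of its `j`-th row. -/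
theorem pi_add_covering_entrywise {n m : ℕ} (c : Fin m → ℕ) (c' : ℕ)
    (D : (t : Fin m) → Fin (c t) → Finset (Fin n))
    (C' : Fin c' → Finset (Fin n))
    (hD : ∀ t, IsCovering (D t)) (hC' : IsCovering C') :
    ∀ i j : Fin n,
      (Pi2 (fun q : Σ t : Fin m, Fin (c t) => D q.1 q.2) i j = false →
        Pi2 (Sum.elim (fun q : Σ t : Fin m, Fin (c t) => D q.1 q.2) C') i j = false) ∧
      (Pi2 (fun q : Σ t : Fin m, Fin (c t) => D q.1 q.2) i j = true →
        Pi2 (Sum.elim (fun q : Σ t : Fin m, Fin (c t) => D q.1 q.2) C') i j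
          = oDot (Mrep C') (fun k j => Mrep C' j k) i j) := by
  intro i j
  simp only [Pi2, oDot, Mrep, decide_eq_false_iff_not, decide_eq_true_eq,
    Sum.forall, Sum.elim_inl, Sum.elim_inr]
  constructor
  · intro h
    exact fun hh => of_decide_eq_false h hh.1
  · intro h
    exact decide_eq_decide.mpr ⟨fun hh => hh.2, fun hh => ⟨of_decide_eq_true h, hh⟩⟩
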